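/- Let A and B be C*-algebras and E a C*-correspondence from A to B, viewed also as a nondegenerate Banach A-B-bimodule. Then for every multiplier (R,L) ∈ M(E) one has ⟨L(b), a·ξ⟩ = b*·⟨R(a*), ξ⟩ for all a ∈ A, b ∈ B and ξ ∈ E. Consequently R is uniquely determined by L, ‖R‖ ≤ ‖L‖, and the projection M(E) → B(B,E), (R,L) ↦ L, is an injective linear isometry, i.e. ‖(R,L)‖ = ‖L‖ for every multiplier (R,L) of E. -/

import Mathlib

/-!
STATEMENT 12: For a C*-correspondence `E` from `A` to `B`, every multiplier `(R,L)` of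
the underlying Banach `A`-`B`-bimodule satisfies `⟨L(b), a·ξ⟩ = b* ⟨R(a*), ξ⟩`; hence
`R` is determined by `L`, `‖R‖ ≤ ‖L‖`, and the projection `(R,L) ↦ L` is an injective
linear isometry (`‖(R,L)‖ = max(‖R‖,‖L‖) = ‖L‖`).

The correspondence structure is encoded by continuous bilinear actions
`lE : A →L[ℂ] E →L[ℂ] E` (`lE a ξ = a·ξ`), `rE : B →L[ℂ] E →L[ℂ] E` (`rE b ξ = ξ·b`)
and a `B`-valued inner product `ip`.  Positivity of `⟨ξ,ξ⟩` is encoded via the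
C*-characterisation `⟨ξ,ξ⟩ = star c * c`.  A multiplier is a pair `(R,L)` of bounded
linear maps with `a·L(b) = R(a)·b`, an element of `(A →L[ℂ] E) × (B →L[ℂ] E)` whose
(product) norm is `max (‖R‖, ‖L‖)`.
-/

namespace Stmt12

universe u v w

variable {A : Type u} {B : Type v} {E : Type w}
variable [NonUnitalCStarAlgebra A] [NonUnitalCStarAlgebra B]
variable [NormedAddCommGroup E] [NormedSpace ℂ E] [CompleteSpace E]
variable (lE : A →L[ℂ] E →L[ℂ] E) (rE : B →L[ℂ] E →L[ℂ] E) (ip : E → E → B)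

/-- `(lE, rE, ip)` makes `E` a C*-correspondence from `A` to `B`. -/
structure IsCStarCorrespondence : Prop where
  ip_add_right : ∀ ξ ζ η, ip ξ (ζ + η) = ip ξ ζ + ip ξ η
  ip_smul_right : ∀ (c : ℂ) ξ ζ, ip ξ (c • ζ) = c • ip ξ ζ
  ip_rsmul_right : ∀ ξ ζ b, ip ξ (rE b ζ) = ip ξ ζ * b
  ip_star : ∀ ξ ζ, star (ip ξ ζ) = ip ζ ξ
  ip_nonneg : ∀ ξ, ∃ c, ip ξ ξ = star c * c
  ip_definite : ∀ ξ, ip ξ ξ = 0 → ξ = 0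
  norm_eq : ∀ ξ, ‖ξ‖ = Real.sqrt ‖ip ξ ξ‖
  rsmul_mul : ∀ b b' ξ, rE (b * b') ξ = rE b' (rE b ξ)
  lsmul_mul : ∀ a a' ξ, lE (a * a') ξ = lE a (lE a' ξ)
  ip_lsmul : ∀ a ξ ζ, ip (lE a ξ) ζ = ip ξ (lE (star a) ζ)
  smul_comm : ∀ a b ξ, rE b (lE a ξ) = lE a (rE b ξ)
  nondegenerate : closure (↑(Submodule.span ℂ {y : E | ∃ a ξ, lE a ξ = y}) : Set E) = Set.univ

/-- A multiplier of `E`: a pair `(R, L)` with `a·L(b) = R(a)·b`. -/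
def IsMultiplier (p : (A →L[ℂ] E) × (B →L[ℂ] E)) : Prop :=
  ∀ a b, lE a (p.2 b) = rE b (p.1 a)

section Aux

set_option linter.unusedSectionVars false in
private lemma pow_two_limit {x y C : ℝ} (hx : 0 ≤ x) (hy : 0 ≤ y)
    (h : ∀ n : ℕ, x ^ (2^n) ≤ C * y ^ (2^n)) : x ≤ y := by
  by_contra hlt
  push_neg at hlt
  rcases eq_or_lt_of_le hy with hy0 | hy0
  · have h0 := h 0
    simp only [pow_zero, pow_one] at h0
    rw [← hy0] at h0
    nlinarith
  · have hr : 1 < x / y := (one_lt_div hy0).mpr hlt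
    obtain ⟨n, hn⟩ := pow_unbounded_of_one_lt C hr
    have h2 : (x/y)^n ≤ (x/y)^(2^n) :=
      pow_le_pow_right₀ hr.le (Nat.le_of_lt Nat.lt_two_pow_self)
    have h3 : (x/y)^(2^n) ≤ C := by
      rw [div_pow, div_le_iff₀ (by positivity)]
      exact h n
    linarith

variable {lE rE ip}
variable (hE : IsCStarCorrespondence lE rE ip)
include hE

set_option linter.unusedSectionVars false

private lemma ip_zero_right (ξ : E) : ip ξ 0 = 0 := by
  have h := hE.ip_smul_right 0 ξ 0; simpa using h

private lemma ip_zero_left (ξ : E) : ip 0 ξ = 0 := by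
  rw [← hE.ip_star, ip_zero_right hE, star_zero]

private lemma ip_add_left (ξ ζ η : E) : ip (ξ + ζ) η = ip ξ η + ip ζ η := by
  rw [← hE.ip_star, hE.ip_add_right, star_add, hE.ip_star, hE.ip_star]

private lemma ip_smul_left (c : ℂ) (ξ η : E) : ip (c • ξ) η = star c • ip ξ η := by
  rw [← hE.ip_star, hE.ip_smul_right, star_smul, hE.ip_star]

private lemma ip_rsmul_left (b : B) (ξ η : E) : ip (rE b ξ) η = star b * ip ξ η := by
  rw [← hE.ip_star, hE.ip_rsmul_right, star_mul, hE.ip_star]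

private lemma ip_sub_right (ξ ζ η : E) : ip ξ (ζ - η) = ip ξ ζ - ip ξ η := by
  rw [sub_eq_add_neg, ← neg_one_smul ℂ η, hE.ip_add_right, hE.ip_smul_right,
    neg_one_smul, ← sub_eq_add_neg]

private lemma norm_sq (ξ : E) : ‖ξ‖ ^ 2 = ‖ip ξ ξ‖ := by
  rw [hE.norm_eq, Real.sq_sqrt (norm_nonneg _)]

open Unitization in
/-- Cauchy–Schwarz for the correspondence. -/
private lemma cauchy_schwarz (ξ η : E) : ‖ip ξ η‖ ≤ ‖ξ‖ * ‖η‖ := by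
  by_cases hξ : ξ = 0
  · simp [hξ, ip_zero_left hE]
  letI : PartialOrder (Unitization ℂ B) := CStarAlgebra.spectralOrder _
  haveI : StarOrderedRing (Unitization ℂ B) := CStarAlgebra.spectralOrderedRing _
  set t : ℝ := ‖ξ‖ ^ 2 with ht
  have htpos : 0 < t := by
    have := norm_pos_iff.mpr hξ; positivity
  set b : B := ip ξ η with hb
  set c : ℂ := ((-t : ℝ) : ℂ) with hc
  have hstarc : star c = c := by simp [hc]
  set ζ : E := rE b ξ + c • η with hζ
  have expand : ip ζ ζ =
      star b * (ip ξ ξ * b) + c • (star b * b) + (c • (star b * b) + c • c • ip η η) := by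
    rw [hζ, ip_add_left hE, hE.ip_add_right, hE.ip_add_right]
    rw [ip_rsmul_left hE, hE.ip_rsmul_right, hE.ip_smul_right, ip_smul_left hE,
      ip_smul_left hE, hE.ip_rsmul_right, hE.ip_smul_right, hstarc]
    have h5 : ip η ξ = star b := (hE.ip_star ξ η).symm
    rw [h5, ip_rsmul_left hE, ← hb, add_assoc]
  have hpos : (0 : Unitization ℂ B) ≤ (ip ζ ζ : Unitization ℂ B) := by
    obtain ⟨d, hd⟩ := hE.ip_nonneg ζ
    rw [hd, inr_mul, inr_star]
    exact star_mul_self_nonneg _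
  set β : Unitization ℂ B := (b : Unitization ℂ B) with hβ
  set γ : Unitization ℂ B := ((ip ξ ξ : B) : Unitization ℂ B) with hγ
  set δ : Unitization ℂ B := ((ip η η : B) : Unitization ℂ B) with hδ
  have keyineq : (0:Unitization ℂ B) ≤
      star β * (γ * β) + c • (star β * β) + (c • (star β * β) + c • c • δ) := by
    have := hpos
    rw [expand] at this
    simpa only [inr_add, inr_mul, inr_smul, inr_star] using this
  have hγsa : IsSelfAdjoint γ := by
    rw [IsSelfAdjoint, hγ, ← inr_star, hE.ip_star]
  have hγnorm : ‖γ‖ = t := by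
    rw [hγ, norm_inr, ← norm_sq hE]
  have hγle : star β * (γ * β) ≤ t • (star β * β) := by
    have h1 : γ ≤ algebraMap ℝ (Unitization ℂ B) ‖γ‖ := hγsa.le_algebraMap_norm_self
    have h2 := star_left_conjugate_le_conjugate h1 β
    calc star β * (γ * β) = star β * γ * β := by rw [mul_assoc]
      _ ≤ star β * algebraMap ℝ (Unitization ℂ B) ‖γ‖ * β := h2
      _ = t • (star β * β) := by
          rw [hγnorm, Algebra.algebraMap_eq_smul_one]
          rw [mul_smul_comm, smul_mul_assoc, mul_one]
  have csmul : ∀ x : Unitization ℂ B, c • x = (-t) • x := fun x => by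
    rw [hc, Complex.coe_smul]
  have key2 : t • (star β * β) ≤ (t * t) • δ := by
    have h3 : (0:Unitization ℂ B) ≤
        t • (star β * β) + (-t) • (star β * β) + ((-t) • (star β * β) + ((-t) * (-t)) • δ) := by
      calc (0:Unitization ℂ B) ≤
          star β * (γ * β) + c • (star β * β) + (c • (star β * β) + c • c • δ) := keyineq
        _ ≤ t • (star β * β) + (-t) • (star β * β) + ((-t) • (star β * β) + ((-t)*(-t)) • δ) := by
            rw [csmul, csmul, csmul, smul_smul]
            gcongr
    have heq : t • (star β * β) + (-t) • (star β * β) + ((-t) • (star β * β) + ((-t)*(-t)) • δ)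
        = (t*t) • δ - t • (star β * β) := by module
    rw [heq] at h3
    exact sub_nonneg.mp h3
  have hPnn : (0:Unitization ℂ B) ≤ t • (star β * β) := by
    have : t • (star β * β) = star (((Real.sqrt t : ℝ):ℂ) • β) * ((((Real.sqrt t : ℝ)):ℂ) • β) := by
      rw [star_smul, Complex.star_def, Complex.conj_ofReal, smul_mul_smul_comm,
        ← Complex.ofReal_mul, Real.mul_self_sqrt htpos.le, Complex.coe_smul]
    rw [this]
    exact star_mul_self_nonneg _
  have hnorm := CStarAlgebra.norm_le_norm_of_nonneg_of_le hPnn key2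
  rw [norm_smul, norm_smul, Real.norm_eq_abs, Real.norm_eq_abs, abs_of_pos htpos,
    abs_of_pos (by positivity : (0:ℝ) < t*t)] at hnorm
  have hβnorm : ‖star β * β‖ = ‖b‖ * ‖b‖ := by
    rw [CStarRing.norm_star_mul_self, hβ, norm_inr]
  have hδnorm : ‖δ‖ = ‖η‖ ^ 2 := by rw [hδ, norm_inr, ← norm_sq hE]
  rw [hβnorm, hδnorm] at hnorm
  have hfin : ‖b‖ * ‖b‖ ≤ (‖ξ‖ * ‖η‖) * (‖ξ‖ * ‖η‖) := by
    have := le_of_mul_le_mul_left (by linarith : t * (‖b‖ * ‖b‖) ≤ t * (t * ‖η‖^2)) htpos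
    calc ‖b‖ * ‖b‖ ≤ t * ‖η‖ ^ 2 := this
      _ = (‖ξ‖ * ‖η‖) * (‖ξ‖ * ‖η‖) := by rw [ht]; ring
  nlinarith [norm_nonneg b, mul_nonneg (norm_nonneg ξ) (norm_nonneg η)]

private lemma lE_step (ζ : E) (x : A) (hx : IsSelfAdjoint x) :
    ‖lE x ζ‖ ^ 2 ≤ ‖ζ‖ * ‖lE (x * x) ζ‖ := by
  rw [norm_sq hE]
  have h1 : ip (lE x ζ) (lE x ζ) = ip ζ (lE (x * x) ζ) := by
    rw [hE.ip_lsmul, ← hE.lsmul_mul, hx.star_eq]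
  rw [h1]
  exact cauchy_schwarz hE ζ _

private lemma lE_sa_bound (ζ : E) (h : A) (hsa : IsSelfAdjoint h) :
    ‖lE h ζ‖ ≤ ‖h‖ * ‖ζ‖ := by
  by_cases hζ : ζ = 0
  · simp [hζ]
  have hz : 0 < ‖ζ‖ := norm_pos_iff.mpr hζ
  set g : ℕ → A := fun n => (fun x => x * x)^[n] h with hg
  have hg0 : g 0 = h := rfl
  have hgs : ∀ n, g (n+1) = g n * g n := fun n => Function.iterate_succ_apply' _ _ _
  have gsa : ∀ n, IsSelfAdjoint (g n) := by
    intro n; induction n with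
    | zero => exact hsa
    | succ n ih => rw [IsSelfAdjoint, hgs, star_mul, ih.star_eq]
  have gnorm : ∀ n, ‖g n‖ ≤ ‖h‖ ^ (2^n) := by
    intro n; induction n with
    | zero => simp [hg0]
    | succ n ih =>
      calc ‖g (n+1)‖ = ‖g n * g n‖ := by rw [hgs]
        _ ≤ ‖g n‖ * ‖g n‖ := norm_mul_le _ _
        _ ≤ ‖h‖^(2^n) * ‖h‖^(2^n) := mul_le_mul ih ih (norm_nonneg _) (by positivity)
        _ = ‖h‖^(2^(n+1)) := by rw [← pow_add]; congr 1; omega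
  set x : ℝ := ‖lE h ζ‖ with hx
  set z : ℝ := ‖ζ‖ with hzz
  have main : ∀ n, x ^ (2^n) * z ≤ z ^ (2^n) * ‖lE (g n) ζ‖ := by
    intro n; induction n with
    | zero => simp [hg0, mul_comm]; exact le_rfl
    | succ n ih =>
      have e1 : (x ^ 2^n * z)^2 = x ^ (2^(n+1)) * z * z := by
        rw [mul_pow, ← pow_mul, ← pow_succ]; ring
      have e2 : (z ^ 2^n * ‖lE (g n) ζ‖)^2 = z ^ (2^(n+1)) * ‖lE (g n) ζ‖^2 := by
        rw [mul_pow, ← pow_mul, ← pow_succ]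
      have h1 : (x ^ 2^n * z)^2 ≤ (z ^ 2^n * ‖lE (g n) ζ‖)^2 :=
        pow_le_pow_left₀ (by positivity) ih 2
      have h2 : ‖lE (g n) ζ‖^2 ≤ z * ‖lE (g (n+1)) ζ‖ := by
        rw [hgs]; exact lE_step hE ζ (g n) (gsa n)
      have h3 : x ^ (2^(n+1)) * z * z ≤ z ^ (2^(n+1)) * (z * ‖lE (g (n+1)) ζ‖) := by
        rw [← e1]
        refine h1.trans ?_
        rw [e2]
        exact mul_le_mul_of_nonneg_left h2 (by positivity)
      have h4 : (x ^ (2^(n+1)) * z) * z ≤ (z ^ (2^(n+1)) * ‖lE (g (n+1)) ζ‖) * z := by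
        calc (x ^ (2^(n+1)) * z) * z ≤ z ^ (2^(n+1)) * (z * ‖lE (g (n+1)) ζ‖) := h3
          _ = (z ^ (2^(n+1)) * ‖lE (g (n+1)) ζ‖) * z := by ring
      exact le_of_mul_le_mul_right h4 hz
  have bound : ∀ n, x ^ (2^n) ≤ ‖lE‖ * (‖h‖ * z) ^ (2^n) := by
    intro n
    have hb1 : ‖lE (g n) ζ‖ ≤ ‖lE‖ * ‖g n‖ * z := by
      calc ‖lE (g n) ζ‖ ≤ ‖lE (g n)‖ * z := (lE (g n)).le_opNorm ζ
        _ ≤ (‖lE‖ * ‖g n‖) * z := mul_le_mul_of_nonneg_right (lE.le_opNorm _) hz.le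
    have hb2 : x ^ (2^n) * z ≤ (‖lE‖ * (‖h‖ * z) ^ (2^n)) * z := by
      calc x ^ (2^n) * z ≤ z ^ (2^n) * ‖lE (g n) ζ‖ := main n
        _ ≤ z ^ (2^n) * (‖lE‖ * ‖g n‖ * z) :=
            mul_le_mul_of_nonneg_left hb1 (by positivity)
        _ ≤ z ^ (2^n) * (‖lE‖ * ‖h‖^(2^n) * z) := by
            have h5 : ‖lE‖ * ‖g n‖ ≤ ‖lE‖ * ‖h‖^(2^n) :=
              mul_le_mul_of_nonneg_left (gnorm n) (ContinuousLinearMap.opNorm_nonneg lE)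
            exact mul_le_mul_of_nonneg_left
              (mul_le_mul_of_nonneg_right h5 hz.le) (by positivity)
        _ = (‖lE‖ * (‖h‖ * z) ^ (2^n)) * z := by rw [mul_pow]; ring
    exact le_of_mul_le_mul_right hb2 hz
  exact pow_two_limit (norm_nonneg _) (by positivity) bound

/-- The left action is contractive: `‖a·ζ‖ ≤ ‖a‖ ‖ζ‖`. -/
private lemma lE_contract (a : A) (ζ : E) : ‖lE a ζ‖ ≤ ‖a‖ * ‖ζ‖ := by
  have h1 : ‖lE a ζ‖ ^ 2 ≤ ‖ζ‖ * ‖lE (star a * a) ζ‖ := by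
    rw [norm_sq hE]
    have : ip (lE a ζ) (lE a ζ) = ip ζ (lE (star a * a) ζ) := by
      rw [hE.ip_lsmul, ← hE.lsmul_mul]
    rw [this]
    exact cauchy_schwarz hE ζ _
  have h2 : ‖lE (star a * a) ζ‖ ≤ ‖star a * a‖ * ‖ζ‖ :=
    lE_sa_bound hE ζ _ (IsSelfAdjoint.star_mul_self a)
  have h3 : ‖lE a ζ‖ ^ 2 ≤ (‖a‖ * ‖ζ‖) ^ 2 := by
    calc ‖lE a ζ‖ ^ 2 ≤ ‖ζ‖ * (‖star a * a‖ * ‖ζ‖) :=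
        h1.trans (mul_le_mul_of_nonneg_left h2 (norm_nonneg _))
      _ = (‖a‖ * ‖ζ‖) ^ 2 := by rw [CStarRing.norm_star_mul_self]; ring
  have := Real.sqrt_le_sqrt h3
  rwa [Real.sqrt_sq (norm_nonneg _), Real.sqrt_sq (by positivity)] at this

end Aux

/-- **Multipliers of a C*-correspondence are determined by their second component, and
the projection `(R,L) ↦ L` is an injective linear isometry.** -/
theorem multiplier_determined_by_second_component
    (hE : IsCStarCorrespondence lE rE ip) :
    (∀ m : (A →L[ℂ] E) × (B →L[ℂ] E), IsMultiplier lE rE m →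
      ∀ (a : A) (b : B) (ξ : E),
        ip (m.2 b) (lE a ξ) = star b * ip (m.1 (star a)) ξ) ∧
    -- `R` is uniquely determined by `L`
    (∀ R R' : A →L[ℂ] E, ∀ L : B →L[ℂ] E,
      IsMultiplier lE rE (R, L) → IsMultiplier lE rE (R', L) → R = R') ∧
    -- `‖R‖ ≤ ‖L‖`
    (∀ m : (A →L[ℂ] E) × (B →L[ℂ] E), IsMultiplier lE rE m → ‖m.1‖ ≤ ‖m.2‖) ∧
    -- the projection is isometric: `‖(R,L)‖ = ‖L‖`
    (∀ m : (A →L[ℂ] E) × (B →L[ℂ] E), IsMultiplier lE rE m → ‖m‖ = ‖m.2‖) ∧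
    -- and injective
    (∀ m m' : (A →L[ℂ] E) × (B →L[ℂ] E), IsMultiplier lE rE m → IsMultiplier lE rE m' →
      m.2 = m'.2 → m = m') := by
  have comp1 : ∀ m : (A →L[ℂ] E) × (B →L[ℂ] E), IsMultiplier lE rE m →
      ∀ (a : A) (b : B) (ξ : E),
        ip (m.2 b) (lE a ξ) = star b * ip (m.1 (star a)) ξ := by
    intro m hm a b ξ
    calc ip (m.2 b) (lE a ξ) = star (ip (lE a ξ) (m.2 b)) := (hE.ip_star _ _).symm
      _ = star (ip ξ (lE (star a) (m.2 b))) := by rw [hE.ip_lsmul]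
      _ = star (ip ξ (rE b (m.1 (star a)))) := by rw [hm (star a) b]
      _ = star (ip ξ (m.1 (star a)) * b) := by rw [hE.ip_rsmul_right]
      _ = star b * ip (m.1 (star a)) ξ := by rw [star_mul, hE.ip_star]
  have comp2 : ∀ R R' : A →L[ℂ] E, ∀ L : B →L[ℂ] E,
      IsMultiplier lE rE (R, L) → IsMultiplier lE rE (R', L) → R = R' := by
    intro R R' L h h'
    ext a
    have hz : ∀ ξ : E, ip ξ (R a) = ip ξ (R' a) := by
      intro ξ
      set z : B := ip ξ (R a) - ip ξ (R' a) with hzdef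
      have hb : ∀ b : B, z * b = 0 := by
        intro b
        have e1 : ip ξ (R a) * b = ip ξ (rE b (R a)) := (hE.ip_rsmul_right ξ (R a) b).symm
        have e2 : ip ξ (R' a) * b = ip ξ (rE b (R' a)) := (hE.ip_rsmul_right ξ (R' a) b).symm
        have e3 : rE b (R a) = rE b (R' a) := by
          rw [← h a b, ← h' a b]
        rw [hzdef, sub_mul, e1, e2, e3, sub_self]
      have h0 : z * star z = 0 := hb (star z)
      have hnz : ‖z‖ * ‖z‖ = 0 := by
        rw [← CStarRing.norm_self_mul_star, h0, norm_zero]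
      have : z = 0 := norm_eq_zero.mp (mul_self_eq_zero.mp hnz)
      exact sub_eq_zero.mp this
    have hd : ip (R a - R' a) (R a - R' a) = 0 := by
      rw [ip_sub_right hE, hz (R a - R' a), sub_self]
    exact sub_eq_zero.mp (hE.ip_definite _ hd)
  have comp3 : ∀ m : (A →L[ℂ] E) × (B →L[ℂ] E), IsMultiplier lE rE m → ‖m.1‖ ≤ ‖m.2‖ := by
    intro m hm
    refine ContinuousLinearMap.opNorm_le_bound _ (norm_nonneg m.2) fun a => ?_
    by_cases hξ0 : m.1 a = 0
    · rw [hξ0, norm_zero]; positivity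
    set ξ : E := m.1 a with hξdef
    have hξpos : 0 < ‖ξ‖ := norm_pos_iff.mpr hξ0
    set hh : B := ip ξ ξ with hhdef
    have hhsa : star hh = hh := hE.ip_star ξ ξ
    have hhnorm : ‖hh‖ = ‖ξ‖ ^ 2 := (norm_sq hE ξ).symm
    have hhpos : 0 < ‖hh‖ := by rw [hhnorm]; positivity
    -- ‖ξ · hh‖ = ‖ξ‖³
    have e1 : ‖rE hh ξ‖ ^ 2 = ‖hh * (hh * hh)‖ := by
      rw [norm_sq hE, ip_rsmul_left hE, hE.ip_rsmul_right, hhsa, ← hhdef]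
    have cube_le : ‖hh * (hh * hh)‖ ≤ ‖hh‖ ^ 3 := by
      calc ‖hh * (hh * hh)‖ ≤ ‖hh‖ * ‖hh * hh‖ := norm_mul_le _ _
        _ ≤ ‖hh‖ * (‖hh‖ * ‖hh‖) :=
            mul_le_mul_of_nonneg_left (norm_mul_le _ _) (norm_nonneg _)
        _ = ‖hh‖ ^ 3 := by ring
    have le_cube : ‖hh‖ ^ 3 ≤ ‖hh * (hh * hh)‖ := by
      have sq1 : ‖hh * hh‖ = ‖hh‖ * ‖hh‖ := by
        calc ‖hh * hh‖ = ‖star hh * hh‖ := by rw [hhsa]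
          _ = ‖hh‖ * ‖hh‖ := CStarRing.norm_star_mul_self (x := hh)
      have sq2 : ‖(hh * hh) * (hh * hh)‖ = ‖hh‖ ^ 4 := by
        have hsa2 : star (hh * hh) = hh * hh := by rw [star_mul, hhsa]
        calc ‖(hh * hh) * (hh * hh)‖ = ‖star (hh * hh) * (hh * hh)‖ := by rw [hsa2]
          _ = ‖hh * hh‖ * ‖hh * hh‖ := CStarRing.norm_star_mul_self (x := hh * hh)
          _ = ‖hh‖ ^ 4 := by rw [sq1]; ring
      have h4 : ‖hh‖ ^ 4 ≤ ‖hh‖ * ‖hh * (hh * hh)‖ := by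
        calc ‖hh‖ ^ 4 = ‖(hh * hh) * (hh * hh)‖ := sq2.symm
          _ = ‖hh * (hh * (hh * hh))‖ := by rw [mul_assoc]
          _ ≤ ‖hh‖ * ‖hh * (hh * hh)‖ := norm_mul_le _ _
      have h5 : ‖hh‖ * ‖hh‖ ^ 3 ≤ ‖hh‖ * ‖hh * (hh * hh)‖ := by
        calc ‖hh‖ * ‖hh‖ ^ 3 = ‖hh‖ ^ 4 := by ring
          _ ≤ ‖hh‖ * ‖hh * (hh * hh)‖ := h4
      exact le_of_mul_le_mul_left h5 hhpos
    have e2 : ‖rE hh ξ‖ ^ 2 = (‖ξ‖ ^ 3) ^ 2 := by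
      rw [e1, le_antisymm cube_le le_cube, hhnorm]; ring
    have e3 : ‖rE hh ξ‖ = ‖ξ‖ ^ 3 := by
      have := congrArg Real.sqrt e2
      rwa [Real.sqrt_sq (norm_nonneg _), Real.sqrt_sq (by positivity)] at this
    have e4 : rE hh ξ = lE a (m.2 hh) := (hm a hh).symm
    have e5 : ‖ξ‖ ^ 3 ≤ ‖m.2‖ * ‖a‖ * ‖ξ‖ ^ 2 := by
      calc ‖ξ‖ ^ 3 = ‖lE a (m.2 hh)‖ := by rw [← e4, e3]
        _ ≤ ‖a‖ * ‖m.2 hh‖ := lE_contract hE a _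
        _ ≤ ‖a‖ * (‖m.2‖ * ‖hh‖) :=
            mul_le_mul_of_nonneg_left (m.2.le_opNorm hh) (norm_nonneg a)
        _ = ‖m.2‖ * ‖a‖ * ‖ξ‖ ^ 2 := by rw [hhnorm]; ring
    nlinarith [hξpos, norm_nonneg a, ContinuousLinearMap.opNorm_nonneg m.2]
  refine ⟨comp1, comp2, comp3, fun m hm => ?_, fun m m' hm hm' h2 => ?_⟩
  · rw [Prod.norm_def]
    exact max_eq_right (comp3 m hm)
  · refine Prod.ext ?_ h2
    refine comp2 m.1 m'.1 m.2 hm ?_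
    intro a b
    rw [h2]
    exact hm' a b


end Stmt12
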